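/- If κ is a singular cardinal with 2^κ = κ⁺ and A is a cofinal subset of κ consisting of regular cardinals with |A| < min(A), then there exists a scale of length κ⁺ in ∏A, i.e. a sequence ⟨f_α : α < κ⁺⟩ of functions in ∏A that is increasing and cofinal with respect to the eventual domination order <*. -/

import Mathlib

open Cardinal Ordinal

noncomputable section Stmt0Aux

open scoped Classical

/-- Index type of a chosen cofinal (lsub) sequence for `α`. -/
def seqI (α : Ordinal.{0}) : Type := (Ordinal.exists_lsub_cof α).choose

def seqe (α : Ordinal.{0}) : seqI α → Ordinal.{0} :=
  (Ordinal.exists_lsub_cof α).choose_spec.choose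

lemma lsub_seqe (α : Ordinal.{0}) : Ordinal.lsub (seqe α) = α :=
  (Ordinal.exists_lsub_cof α).choose_spec.choose_spec.1

lemma mk_seqI (α : Ordinal.{0}) : #(seqI α) = α.cof :=
  (Ordinal.exists_lsub_cof α).choose_spec.choose_spec.2

lemma seqe_lt {α : Ordinal.{0}} (i : seqI α) : seqe α i < α := by
  conv_rhs => rw [← lsub_seqe α]
  exact Ordinal.lt_lsub _ _

/-- The scale, built by transfinite recursion from an enumeration `H` of `∏A`. -/
def fA (A : Set Cardinal.{0}) (H : Ordinal.{0} → (A → Ordinal.{0})) (α : Ordinal.{0}) :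
    A → Ordinal.{0} :=
  Ordinal.limitRecOn α (fun a => H 0 a + 1)
    (fun β fβ => fun a => max (fβ a + 1) (H (Order.succ β) a + 1))
    (fun α _ ih => fun a =>
      max (if α.cof < (a : Cardinal) then
            ⨆ i : seqI α, (ih (seqe α i) (seqe_lt i) a + 1) else 0)
          (H α a + 1))

lemma fA_zero (A : Set Cardinal.{0}) (H : Ordinal.{0} → (A → Ordinal.{0})) :
    fA A H 0 = fun a => H 0 a + 1 :=
  Ordinal.limitRecOn_zero _ _ _

lemma fA_succ (A : Set Cardinal.{0}) (H : Ordinal.{0} → (A → Ordinal.{0})) (β : Ordinal.{0}) :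
    fA A H (Order.succ β) = fun a => max (fA A H β a + 1) (H (Order.succ β) a + 1) :=
  Ordinal.limitRecOn_succ _ _ _ _

lemma fA_limit (A : Set Cardinal.{0}) (H : Ordinal.{0} → (A → Ordinal.{0})) {α : Ordinal.{0}}
    (hα : Order.IsSuccLimit α) :
    fA A H α = fun (a : A) =>
      max (if α.cof < (a : Cardinal) then
            ⨆ i : seqI α, (fA A H (seqe α i) a + 1) else 0)
          (H α a + 1) :=
  Ordinal.limitRecOn_limit _ _ _ _ hα

lemma lt_add_one' (o : Ordinal.{0}) : o < o + 1 :=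
  lt_of_lt_of_eq (Order.lt_succ o) (Ordinal.add_one_eq_succ o).symm

lemma H_lt_fA (A : Set Cardinal.{0}) (H : Ordinal.{0} → (A → Ordinal.{0})) (α : Ordinal.{0})
    (a : A) : H α a < fA A H α a := by
  rcases Ordinal.zero_or_succ_or_isSuccLimit α with h0 | ⟨β, rfl⟩ | hlim
  · subst h0; rw [fA_zero]; exact lt_add_one' _
  · rw [fA_succ]
    exact lt_of_lt_of_le (lt_add_one' _)
      (le_max_right _ _)
  · rw [fA_limit A H hlim]
    exact lt_of_lt_of_le (lt_add_one' _)
      (le_max_right _ _)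

lemma main (κ : Cardinal.{0}) (hκ : ℵ₀ ≤ κ) (hsing : κ.ord.cof < κ)
    (A : Set Cardinal.{0})
    (hreg : ∀ a ∈ A, a.IsRegular)
    (hbelow : ∀ a ∈ A, a < κ)
    (hcof : ∀ c < κ, ∃ a ∈ A, c < a)
    (H : Ordinal.{0} → (A → Ordinal.{0}))
    (hH : ∀ α (a : A), H α a < (a : Cardinal).ord)
    (α : Ordinal.{0}) (hα : α < (Order.succ κ).ord) :
    (∀ a : A, fA A H α a < (a : Cardinal).ord) ∧
    (∀ β < α, ∃ γ ∈ A, ∀ a : A, γ < (a : Cardinal) → fA A H β a < fA A H α a) := by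
  obtain ⟨γ₀, hγ₀A, -⟩ := hcof 0 (lt_of_lt_of_le aleph0_pos hκ)
  have hordlim : ∀ a : A, Order.IsSuccLimit ((a : Cardinal).ord) := fun a =>
    Cardinal.isSuccLimit_ord (hreg a a.2).aleph0_le
  have hsucclt : ∀ (a : A) (o : Ordinal), o < (a : Cardinal).ord → o + 1 < (a : Cardinal).ord :=
    fun a o h => by
      rw [Ordinal.add_one_eq_succ]; exact (hordlim a).succ_lt h
  revert hα
  induction α using Ordinal.limitRecOn with
  | zero =>
    intro _
    refine ⟨fun a => ?_, fun β hβ => absurd hβ (not_lt_of_ge (zero_le (a := β)))⟩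
    rw [fA_zero]
    exact hsucclt a _ (hH 0 a)
  | add_one β ih =>
    rw [Ordinal.add_one_eq_succ]
    intro hα
    have hβ : β < (Order.succ κ).ord := lt_trans (Order.lt_succ β) hα
    obtain ⟨ih1, ih2⟩ := ih hβ
    constructor
    · intro a
      rw [fA_succ]
      exact max_lt (hsucclt a _ (ih1 a)) (hsucclt a _ (hH _ a))
    · intro β' hβ'
      rcases (Order.lt_succ_iff).mp hβ' with hle
      rcases eq_or_lt_of_le hle with rfl | hlt
      · refine ⟨γ₀, hγ₀A, fun a _ => ?_⟩
        rw [fA_succ]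
        exact lt_of_lt_of_le (lt_add_one' _) (le_max_left _ _)
      · obtain ⟨γ, hγA, hγ⟩ := ih2 β' hlt
        refine ⟨γ, hγA, fun a ha => ?_⟩
        rw [fA_succ]
        exact lt_of_lt_of_le (lt_of_lt_of_le (hγ a ha) (le_of_lt (lt_add_one' _))) (le_max_left _ _)
  | limit α hlim ih =>
    intro hα
    have hcofreg : (α.cof).IsRegular := Cardinal.isRegular_cof hlim
    have hcofκ : α.cof < κ := by
      have h1 : α.cof ≤ κ := by
        have := (Cardinal.lt_ord.mp hα)
        exact le_trans (Ordinal.cof_le_card α) (Order.lt_succ_iff.mp this)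
      rcases lt_or_eq_of_le h1 with h | h
      · exact h
      · exfalso
        have : κ ≤ κ.ord.cof := by rw [← h]; exact hcofreg.2
        exact absurd hsing (not_lt_of_ge this)
    constructor
    · intro a
      rw [fA_limit A H hlim]
      refine max_lt ?_ (hsucclt a _ (hH _ a))
      by_cases hc : α.cof < (a : Cardinal)
      · rw [if_pos hc]
        refine iSup_lt_ord_of_isRegular (hreg a a.2) (by rw [mk_seqI]; exact hc) fun i => ?_
        have hlt : seqe α i < (Order.succ κ).ord := lt_trans (seqe_lt i) hα
        exact hsucclt a _ (((ih (seqe α i) (seqe_lt i)) hlt).1 a)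
      · rw [if_neg hc]
        rw [Cardinal.lt_ord]
        simpa using lt_of_lt_of_le aleph0_pos (hreg a a.2).aleph0_le
    · intro β hβ
      obtain ⟨i, hi⟩ : ∃ i, β ≤ seqe α i := by
        have : β < Ordinal.lsub (seqe α) := by rw [lsub_seqe]; exact hβ
        exact Ordinal.lt_lsub_iff.mp this
      have hei : seqe α i < (Order.succ κ).ord := lt_trans (seqe_lt i) hα
      have hstep : ∃ γ₁ ∈ A, ∀ a : A, γ₁ < (a : Cardinal) →
          fA A H β a ≤ fA A H (seqe α i) a := by
        rcases eq_or_lt_of_le hi with rfl | hlt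
        · exact ⟨γ₀, hγ₀A, fun a _ => le_rfl⟩
        · obtain ⟨γ, hγA, hγ⟩ := ((ih (seqe α i) (seqe_lt i)) hei).2 β hlt
          exact ⟨γ, hγA, fun a ha => le_of_lt (hγ a ha)⟩
      obtain ⟨γ₁, hγ₁A, hγ₁⟩ := hstep
      obtain ⟨γ₂, hγ₂A, hγ₂⟩ := hcof α.cof hcofκ
      obtain ⟨γ, hγA, hγ⟩ := hcof (max γ₁ γ₂) (max_lt (hbelow _ hγ₁A) (hbelow _ hγ₂A))
      refine ⟨γ, hγA, fun a ha => ?_⟩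
      have ha1 : γ₁ < (a : Cardinal) := lt_trans (lt_of_le_of_lt (le_max_left _ _) hγ) ha
      have ha2 : α.cof < (a : Cardinal) :=
        lt_trans (lt_of_lt_of_le hγ₂ (le_trans (le_max_right γ₁ γ₂) (le_of_lt hγ))) ha
      rw [fA_limit A H hlim]
      have hsup : fA A H (seqe α i) a + 1 ≤ ⨆ j : seqI α, (fA A H (seqe α j) a + 1) :=
        le_ciSup (Ordinal.bddAbove_range _) i
      calc fA A H β a ≤ fA A H (seqe α i) a := hγ₁ a ha1
        _ < fA A H (seqe α i) a + 1 := lt_add_one' _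
        _ ≤ ⨆ j : seqI α, (fA A H (seqe α j) a + 1) := hsup
        _ ≤ _ := by dsimp only; rw [if_pos ha2]; exact le_max_left _ _

end Stmt0Aux

/-- If κ is a singular cardinal with 2^κ = κ⁺ and A is a cofinal progressive
subset of κ consisting of regular cardinals, then there is a scale of length κ⁺ in ∏A. -/
theorem stmt_0 (κ : Cardinal.{0}) (hκ : ℵ₀ ≤ κ) (hsing : κ.ord.cof < κ)
    (hch : (2 : Cardinal) ^ κ = Order.succ κ)
    (A : Set Cardinal)
    (hreg : ∀ a ∈ A, a.IsRegular)
    (hbelow : ∀ a ∈ A, a < κ)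
    (hcof : ∀ c < κ, ∃ a ∈ A, c < a)
    (hprog : #A < Cardinal.lift.{1} (sInf A)) :
    ∃ f : Ordinal → (A → Ordinal),
      (∀ α < (Order.succ κ).ord, ∀ a : A, f α a < (a : Cardinal).ord) ∧
      (∀ α < (Order.succ κ).ord, ∀ β < (Order.succ κ).ord, α < β →
        ∃ γ ∈ A, ∀ a : A, γ < (a : Cardinal) → f α a < f β a) ∧
      (∀ h : A → Ordinal, (∀ a : A, h a < (a : Cardinal).ord) →
        ∃ α < (Order.succ κ).ord, ∃ γ ∈ A, ∀ a : A, γ < (a : Cardinal) → h a < f α a) := by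
  classical
  set μ := Order.succ κ with hμ
  -- basic facts
  obtain ⟨γ₀, hγ₀A, -⟩ := hcof 0 (lt_of_lt_of_le aleph0_pos hκ)
  have hAne : A.Nonempty := ⟨γ₀, hγ₀A⟩
  have hordpos : ∀ a : A, (0 : Ordinal) < (a : Cardinal).ord := by
    intro a
    rw [Cardinal.lt_ord]
    simpa using lt_of_lt_of_le aleph0_pos (hreg a a.2).aleph0_le
  -- the set of products
  set P := {h : A → Ordinal.{0} // ∀ a : A, h a < (a : Cardinal).ord} with hP
  have hPne : Nonempty P := ⟨⟨fun _ => 0, fun a => hordpos a⟩⟩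
  -- cardinality bound on P
  have hcard : #P ≤ Cardinal.lift.{1} μ := by
    have h1 : #P ≤ #(A → Set.Iio κ.ord) := by
      refine Cardinal.mk_le_of_injective (f := fun p a =>
        (⟨p.1 a, lt_trans (p.2 a) (Cardinal.ord_lt_ord.2 (hbelow a a.2))⟩ : Set.Iio κ.ord)) ?_
      intro p q hpq
      ext a
      exact congrArg Subtype.val (congrFun hpq a)
    have h2 : #(A → Set.Iio κ.ord) = Cardinal.lift.{1} κ ^ #A := by
      rw [← Cardinal.power_def, Ordinal.mk_Iio_ordinal, Cardinal.card_ord]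
    have hAκ : #A ≤ Cardinal.lift.{1} κ := by
      have hsinf : sInf A < κ := by
        have := csInf_mem hAne
        exact hbelow _ this
      exact le_of_lt (lt_of_lt_of_le hprog (Cardinal.lift_le.2 (le_of_lt hsinf)))
    have h3 : Cardinal.lift.{1} κ ^ #A ≤ Cardinal.lift.{1} κ ^ Cardinal.lift.{1} κ :=
      Cardinal.power_le_power_left
        (fun h => ne_of_gt (lt_of_lt_of_le aleph0_pos hκ) (Cardinal.lift_eq_zero.1 h)) hAκ
    have h4 : Cardinal.lift.{1} κ ^ Cardinal.lift.{1} κ = Cardinal.lift.{1} μ := by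
      rw [← Cardinal.lift_power, Cardinal.power_self_eq hκ, hch]
    calc #P ≤ #(A → Set.Iio κ.ord) := h1
      _ = Cardinal.lift.{1} κ ^ #A := h2
      _ ≤ Cardinal.lift.{1} κ ^ Cardinal.lift.{1} κ := h3
      _ = Cardinal.lift.{1} μ := h4
  -- an enumeration of P by ordinals below μ.ord
  have hIio : #P ≤ #(Set.Iio μ.ord) := by
    rwa [Ordinal.mk_Iio_ordinal, Cardinal.card_ord]
  obtain ⟨j⟩ := (Cardinal.le_def P (Set.Iio μ.ord)).mp hIio
  have hsurj : Function.Surjective (Function.invFun j) :=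
    Function.invFun_surjective j.injective
  set H : Ordinal.{0} → (A → Ordinal.{0}) := fun o =>
    if h : o < μ.ord then (Function.invFun j ⟨o, h⟩).1 else fun _ => 0 with hHdef
  have hH : ∀ α (a : A), H α a < (a : Cardinal).ord := by
    intro α a
    simp only [hHdef]
    by_cases h : α < μ.ord
    · rw [dif_pos h]; exact (Function.invFun j ⟨α, h⟩).2 a
    · rw [dif_neg h]; exact hordpos a
  have hHsurj : ∀ h : A → Ordinal, (∀ a : A, h a < (a : Cardinal).ord) →
      ∃ α < μ.ord, ∀ a : A, H α a = h a := by
    intro h hh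
    obtain ⟨⟨α, hα⟩, hjs⟩ := hsurj ⟨h, hh⟩
    simp only [Set.mem_Iio] at hα
    refine ⟨α, hα, fun a => ?_⟩
    simp only [hHdef]
    rw [dif_pos hα, hjs]
  refine ⟨fA A H, ?_, ?_, ?_⟩
  · intro α hα a
    exact (main κ hκ hsing A hreg hbelow hcof H hH α hα).1 a
  · intro α hα β hβ hαβ
    exact (main κ hκ hsing A hreg hbelow hcof H hH β hβ).2 α hαβ
  · intro h hh
    obtain ⟨α, hα, hHa⟩ := hHsurj h hh
    refine ⟨α, hα, γ₀, hγ₀A, fun a _ => ?_⟩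
    rw [← hHa a]
    exact H_lt_fA A H α a
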